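/- (Tangent-line determinant identity from Section 4.4.) Let M, V, W ∈ 𝕜[t], set S(t) := σ^{1/p}(V,W), and define the parameterization x₀(t) = M·V^p, x₁(t) = M·W^p, x₂(t) = M·S − 1. Then in the polynomial ring 𝕜[t][X₀, X₁, X₂] one has the identity det [[X₀, X₁, X₂], [x₀(t), x₁(t), x₂(t)], [x₀′(t), x₁′(t), x₂′(t)]] = (M′ + M²·S′)·(W^p·X₀ − V^p·X₁). (In particular the Wronskian x₀x₁′ − x₀′x₁ vanishes, and wherever M′ + M²·S′ ≠ 0 the tangent line of the parameterized curve is W(t)^p·x₀ − V(t)^p·x₁ = 0, which passes through str = [0:0:1]; the cusps of the image are governed by the equation M′ + M²·S′ = 0.) -/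

import Mathlib

set_option maxHeartbeats 1600000


open Finset

/-- **tangent-line determinant identity from Section 4.4.**
Let `p` be a prime and `𝕜` a (perfect) field of characteristic `p`, with `σ_i ∈ 𝕜` and
`p`-th roots `τ i` (so `τ i ^ p = σ_i`).  Let `M, V, W ∈ 𝕜[t]`,
`S = σ^{1/p}(V,W) = ∑_{i=1}^{p-1} τ_i V^i W^{p-i}`, and set `x₀ = M·V^p`, `x₁ = M·W^p`,
`x₂ = M·S − 1`.  Then in `𝕜[t][X₀,X₁,X₂]`,
`det [[X₀,X₁,X₂],[x₀,x₁,x₂],[x₀′,x₁′,x₂′]] = (M′ + M²·S′)·(W^p·X₀ − V^p·X₁)`. -/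
theorem tangent_line_determinant_identity
    (p : ℕ) (hp : p.Prime) (𝕜 : Type*) [Field 𝕜] [CharP 𝕜 p]
    (s τ : ℕ → 𝕜) (hτ : ∀ i, τ i ^ p = s i)
    (M V W : Polynomial 𝕜)
    (S x₀ x₁ x₂ : Polynomial 𝕜)
    (hS : S = ∑ i ∈ Ioo 0 p, Polynomial.C (τ i) * V ^ i * W ^ (p - i))
    (hx₀ : x₀ = M * V ^ p) (hx₁ : x₁ = M * W ^ p) (hx₂ : x₂ = M * S - 1) :
    Matrix.det
      !![(MvPolynomial.X 0 : MvPolynomial (Fin 3) (Polynomial 𝕜)),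
           MvPolynomial.X 1, MvPolynomial.X 2;
         MvPolynomial.C x₀, MvPolynomial.C x₁, MvPolynomial.C x₂;
         MvPolynomial.C (Polynomial.derivative x₀),
           MvPolynomial.C (Polynomial.derivative x₁),
           MvPolynomial.C (Polynomial.derivative x₂)]
      = MvPolynomial.C (Polynomial.derivative M + M ^ 2 * Polynomial.derivative S) *
          (MvPolynomial.C (W ^ p) * MvPolynomial.X 0 -
           MvPolynomial.C (V ^ p) * MvPolynomial.X 1) := by
  have hVp : Polynomial.derivative (V ^ p) = 0 := by
    rw [Polynomial.derivative_pow]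
    simp [CharP.cast_eq_zero 𝕜 p]
  have hWp : Polynomial.derivative (W ^ p) = 0 := by
    rw [Polynomial.derivative_pow]
    simp [CharP.cast_eq_zero 𝕜 p]
  have hd₀ : Polynomial.derivative x₀ = Polynomial.derivative M * V ^ p := by
    rw [hx₀, Polynomial.derivative_mul, hVp]; ring
  have hd₁ : Polynomial.derivative x₁ = Polynomial.derivative M * W ^ p := by
    rw [hx₁, Polynomial.derivative_mul, hWp]; ring
  have hd₂ : Polynomial.derivative x₂ =
      Polynomial.derivative M * S + M * Polynomial.derivative S := by
    rw [hx₂, Polynomial.derivative_sub, Polynomial.derivative_mul, Polynomial.derivative_one,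
      sub_zero]
  rw [Matrix.det_fin_three]
  simp only [Matrix.cons_val', Matrix.cons_val_zero, Matrix.cons_val_one, Matrix.cons_val_two,
    Matrix.head_cons, Matrix.head_fin_const, Matrix.empty_val', Matrix.cons_val_fin_one,
    Matrix.of_apply, Matrix.tail_cons]
  rw [hd₀, hd₁, hd₂, hx₀, hx₁, hx₂]
  simp only [map_add, map_mul, map_sub, map_one, map_pow]
  ring
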